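/- Let α ∈ [1/2, 3/2] and β > 0 satisfy f_d(0,α,β) > f_s(0,α) ≥ 0, and set μ = f_d(0,α,β). Let α' = (2√(1+μ)·√(1−a²) − 1 + a²)/(2(1−a²)) and β' = ((√(1−2a²) + 4√(1+μ))(1−a²) − 4√(1+μ)·√(1−2a²)·√(1−a²))/(1−a²), so that f_s(0,α') = μ and f_d(0,α',β') = μ. Then f_d(u,α,β) ≤ f_d(u,α',β') ≤ f_d(0,α,β) for all u ∈ [−1,1]. -/

import Mathlib

noncomputable section

open Real Set

/-- A vector in Euclidean 3-space. -/
def v3 (x y z : ℝ) : EuclideanSpace ℝ (Fin 3) := !₂[x, y, z]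

/-- Quadratic Bernstein polynomials (parametrized on `[-1,1]`). -/
def bern (i : Fin 3) (u : ℝ) : ℝ :=
  (Nat.choose 2 (i : ℕ)) * ((1 + u) / 2) ^ (i : ℕ) * ((1 - u) / 2) ^ (2 - (i : ℕ))

/-- Control points `ctrl a α β i j = b i j` of the tensor product quadratic Bézier patch:
`b₀₀ = (-a,-a,√(1-2a²))`, `b₂₀ = (a,-a,√(1-2a²))`, `b₀₂ = (-a,a,√(1-2a²))`,
`b₂₂ = (a,a,√(1-2a²))`, `b₁₀ = α(b₀₀+b₂₀)`, `b₀₁ = α(b₀₀+b₀₂)`, `b₂₁ = α(b₂₀+b₂₂)`,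
`b₁₂ = α(b₀₂+b₂₂)`, `b₁₁ = β(0,0,1)`. The first index is the `u`-index. -/
def ctrl (a α β : ℝ) : Fin 3 → Fin 3 → EuclideanSpace ℝ (Fin 3) :=
  ![![v3 (-a) (-a) (Real.sqrt (1 - 2*a^2)),
     α • (v3 (-a) (-a) (Real.sqrt (1 - 2*a^2)) + v3 (-a) a (Real.sqrt (1 - 2*a^2))),
     v3 (-a) a (Real.sqrt (1 - 2*a^2))],
    ![α • (v3 (-a) (-a) (Real.sqrt (1 - 2*a^2)) + v3 a (-a) (Real.sqrt (1 - 2*a^2))),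
     β • v3 0 0 1,
     α • (v3 (-a) a (Real.sqrt (1 - 2*a^2)) + v3 a a (Real.sqrt (1 - 2*a^2)))],
    ![v3 a (-a) (Real.sqrt (1 - 2*a^2)),
     α • (v3 a (-a) (Real.sqrt (1 - 2*a^2)) + v3 a a (Real.sqrt (1 - 2*a^2))),
     v3 a a (Real.sqrt (1 - 2*a^2))]]

/-- The tensor product quadratic Bézier patch
`p(u,v) = ∑ᵢ ∑ⱼ Bᵢ²(u) Bⱼ²(v) bᵢⱼ`. -/
def bez (a α β u v : ℝ) : EuclideanSpace ℝ (Fin 3) :=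
  ∑ i : Fin 3, ∑ j : Fin 3, (bern i u * bern j v) • ctrl a α β i j

/-- The simplified radial error `f(u,v,α,β) = ‖p(u,v)‖² - 1`. -/
def f (a α β u v : ℝ) : ℝ := ‖bez a α β u v‖ ^ 2 - 1

/-- `f_s(u,α) = f(u,-1,α,β)`; this does not depend on `β` (the control point `b₁₁`
does not contribute on the side `v = -1`), so we take `β = 0`. -/
def fs (a α u : ℝ) : ℝ := f a α 0 u (-1)

/-- `f_d(u,α,β) = f(u,u,α,β)`, the error along the diagonal. -/
def fd (a α β u : ℝ) : ℝ := f a α β u u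

set_option maxHeartbeats 1000000

lemma normsq (x : EuclideanSpace ℝ (Fin 3)) : ‖x‖^2 = x 0^2 + x 1^2 + x 2^2 := by
  rw [EuclideanSpace.norm_eq, Real.sq_sqrt (by positivity)]
  simp [Fin.sum_univ_three, sq_abs]

lemma bez_apply (a A B u v : ℝ) (k : Fin 3) :
    bez a A B u v k = ∑ i : Fin 3, ∑ j : Fin 3, (bern i u * bern j v) * (ctrl a A B i j k) := rfl

lemma fd_eq (a A B u : ℝ) :
    fd a A B u = 2*(a * u * ((1+u^2)/2 + 2*A*((1-u^2)/2)))^2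
      + (Real.sqrt (1-2*a^2) * (((1+u^2)/2)^2 + 4*A*((1+u^2)/2)*((1-u^2)/2))
         + B*((1-u^2)/2)^2)^2 - 1 := by
  rw [fd, f, normsq, bez_apply, bez_apply, bez_apply]
  simp only [Fin.sum_univ_three, ctrl, v3, bern, PiLp.add_apply, PiLp.smul_apply, smul_eq_mul, PiLp.toLp_apply,
    Matrix.cons_val_zero, Matrix.cons_val_one, Matrix.head_cons, Matrix.cons_val_two,
    Matrix.tail_cons, Matrix.head_fin_const]
  norm_num
  ring

lemma fs_eq (a A u : ℝ) :
    fs a A u = (a*u)^2 + (a*((1+u^2)/2 + A*(1-u^2)))^2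
      + (Real.sqrt (1-2*a^2) * ((1+u^2)/2 + A*(1-u^2)))^2 - 1 := by
  rw [fs, f, normsq, bez_apply, bez_apply, bez_apply]
  simp only [Fin.sum_univ_three, ctrl, v3, bern, PiLp.add_apply, PiLp.smul_apply, smul_eq_mul, PiLp.toLp_apply,
    Matrix.cons_val_zero, Matrix.cons_val_one, Matrix.head_cons, Matrix.cons_val_two,
    Matrix.tail_cons, Matrix.head_fin_const]
  norm_num
  ring

lemma key2 (a c s M t : ℝ) (hac : a^2 = 1 - c^2) (hss : s^2 = 2*c^2 - 1)
    (hs0 : 0 ≤ s) (hsc : s ≤ c) (hc1 : c ≤ 1) (hM : 1 ≤ M)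
    (ht0 : 0 ≤ t) (ht1 : t ≤ 1) :
    2*a^2*t*(c*t + M*(1-t))^2 + (c*s*t^2 + 2*M*s*t*(1-t) + M*c*(1-t)^2)^2
      ≤ M^2 * c^2 := by
  have hc0 : 0 ≤ c := hs0.trans hsc
  have hw0 : 0 ≤ 1 - t := by linarith
  have h2c : 1 ≤ 2*c^2 := by nlinarith [sq_nonneg s]
  have hP1 : 0 ≤ 3*c^2 - 2*c*s - 1 := by nlinarith [sq_nonneg (c-s)]
  have hP2 : 0 ≤ 2 - 2*c - c^2*s + 2*c^3 := by
    nlinarith [mul_nonneg (sq_nonneg c) (by linarith : 0 ≤ 2*c - s)]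
  have hB0 : 0 ≤ 1 - 2*c + 2*c^3 := by
    nlinarith [mul_nonneg hc0 (sq_nonneg s)]
  have hP3 : c^2*s ≤ 1 - 2*c + 2*c^3 := by
    have hid : (1 - 2*c + 2*c^3 - c^2*s)*(1 - 2*c + 2*c^3 + c^2*s)
        = (c-1)^2*(1 + c*(c+2)*s^2) := by
      linear_combination (-2*c + 3*c^2 - 2*c^4) * hss
    nlinarith [hid, sq_nonneg (c-1), mul_nonneg (mul_nonneg hc0 (by linarith : (0:ℝ) ≤ c + 2)) (sq_nonneg s), mul_nonneg (mul_nonneg (sq_nonneg c) hs0) hB0]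
  have hA : 0 ≤ c^2*t^3 + 4*c^2*(1-t)*t^2 + 2*(1-t)^2*t + 2*(3*c^2-2*c*s-1)*(1-t)^3 := by
    positivity
  have h2AB : 0 ≤ 2*c^2*t^3 + 4*c^2*(2-c)*(1-t)*t^2 + 2*(2-2*c-c^2*s+2*c^3)*(1-t)^2*t
      + 4*(3*c^2-2*c*s-1)*(1-t)^3 := by
    have h1 : (0:ℝ) ≤ 2 - c := by linarith
    positivity
  have hABC : 0 ≤ 2*c^2*(1-c)^2*(1-t)*t^2 + 2*(1-2*c-c^2*s+2*c^3)*(1-t)^2*t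
      + 2*(3*c^2-2*c*s-1)*(1-t)^3 := by
    have h1 : (0:ℝ) ≤ 1-2*c-c^2*s+2*c^3 := by linarith
    positivity
  have hM1 : 0 ≤ M - 1 := by linarith
  have hmaster : M^2*c^2 - (2*a^2*t*(c*t + M*(1-t))^2
        + (c*s*t^2 + 2*M*s*t*(1-t) + M*c*(1-t)^2)^2)
      = t*((c^2*t^3 + 4*c^2*(1-t)*t^2 + 2*(1-t)^2*t + 2*(3*c^2-2*c*s-1)*(1-t)^3)*(M-1)^2
        + (2*c^2*t^3 + 4*c^2*(2-c)*(1-t)*t^2 + 2*(2-2*c-c^2*s+2*c^3)*(1-t)^2*t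
            + 4*(3*c^2-2*c*s-1)*(1-t)^3)*(M-1)
        + (2*c^2*(1-c)^2*(1-t)*t^2 + 2*(1-2*c-c^2*s+2*c^3)*(1-t)^2*t
            + 2*(3*c^2-2*c*s-1)*(1-t)^3)) := by
    linear_combination (-4*t^2*M^2 - 4*t^3*M*c + 8*t^3*M^2 - t^4*c^2 + 4*t^4*M*c - 4*t^4*M^2) * hss - (2*t*(c*t + M*(1-t))^2) * hac
  linarith [mul_nonneg ht0 (mul_nonneg hA (sq_nonneg (M-1))),
    mul_nonneg ht0 (mul_nonneg h2AB hM1),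
    mul_nonneg ht0 hABC]


/-- Let `α ∈ [1/2, 3/2]` and `β > 0` with `f_d(0,α,β) > f_s(0,α) ≥ 0`, and set
`μ = f_d(0,α,β)`. With `α' = (2√(1+μ)√(1-a²) - 1 + a²)/(2(1-a²))` and
`β' = ((√(1-2a²) + 4√(1+μ))(1-a²) - 4√(1+μ)√(1-2a²)√(1-a²))/(1-a²)`,
we have `f_d(u,α,β) ≤ f_d(u,α',β') ≤ f_d(0,α,β)` for all `u ∈ [-1,1]`. -/
theorem greatergraph (a : ℝ) (ha : 0 < a) (ha' : a ≤ Real.sqrt 2 / 2)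
    (α β : ℝ) (hα : α ∈ Set.Icc (1/2 : ℝ) (3/2)) (hβ : 0 < β)
    (hgt : fs a α 0 < fd a α β 0) (hpos : 0 ≤ fs a α 0)
    (μ α' β' : ℝ) (hμ : μ = fd a α β 0)
    (hα' : α' = (2*Real.sqrt (1 + μ)*Real.sqrt (1 - a^2) - 1 + a^2) / (2*(1 - a^2)))
    (hβ' : β' = ((Real.sqrt (1 - 2*a^2) + 4*Real.sqrt (1 + μ))*(1 - a^2)
        - 4*Real.sqrt (1 + μ)*Real.sqrt (1 - 2*a^2)*Real.sqrt (1 - a^2)) / (1 - a^2)) :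
    ∀ u ∈ Set.Icc (-1:ℝ) 1,
      fd a α β u ≤ fd a α' β' u ∧ fd a α' β' u ≤ fd a α β 0 := by
  obtain ⟨hα1, hα2⟩ := hα
  have h2 : Real.sqrt 2 ^ 2 = 2 := Real.sq_sqrt (by norm_num)
  have ha2 : a^2 ≤ 1/2 := by nlinarith [Real.sqrt_nonneg 2]
  obtain ⟨s, hsdef⟩ : ∃ s, s = Real.sqrt (1 - 2*a^2) := ⟨_, rfl⟩
  obtain ⟨c, hcdef⟩ : ∃ c, c = Real.sqrt (1 - a^2) := ⟨_, rfl⟩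
  rw [← hsdef] at hβ'
  rw [← hcdef] at hα' hβ'
  have hs2 : s^2 = 1 - 2*a^2 := by rw [hsdef]; exact Real.sq_sqrt (by linarith)
  have hc2 : c^2 = 1 - a^2 := by rw [hcdef]; exact Real.sq_sqrt (by nlinarith)
  have hs0 : 0 ≤ s := hsdef ▸ Real.sqrt_nonneg _
  have hc0 : 0 < c := by rw [hcdef]; exact Real.sqrt_pos.mpr (by nlinarith)
  have hcne : c ≠ 0 := ne_of_gt hc0
  have hsc : s ≤ c := by rw [hsdef, hcdef]; exact Real.sqrt_le_sqrt (by nlinarith)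
  have hc1 : c ≤ 1 := by nlinarith
  obtain ⟨M, hMdef⟩ : ∃ M, M = s/4 + α*s + β/4 := ⟨_, rfl⟩
  have hM0 : 0 < M := by
    have h1 : 0 ≤ α*s := mul_nonneg (by linarith) hs0
    rw [hMdef]; linarith
  have hfd0 : fd a α β 0 = M^2 - 1 := by
    rw [fd_eq, ← hsdef, hMdef]; norm_num; ring
  have hμM : μ = M^2 - 1 := by rw [hμ, hfd0]
  have h1μ : 1 + μ = M^2 := by rw [hμM]; ring
  have hmv : Real.sqrt (1+μ) = M := by rw [h1μ, Real.sqrt_sq hM0.le]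
  have hfs0 : fs a α 0 = (c*(1/2+α))^2 - 1 := by
    rw [fs_eq, ← hsdef]
    linear_combination ((1/2+α)^2) * hs2 - ((1/2+α)^2) * hc2
  have hcWnn : 0 ≤ c*(1/2+α) := mul_nonneg hc0.le (by linarith)
  have hcW1 : 1 ≤ c*(1/2+α) := by
    have h := hpos; rw [hfs0] at h
    have h1 : (1:ℝ)^2 ≤ (c*(1/2+α))^2 := by nlinarith
    exact le_of_pow_le_pow_left₀ (by norm_num) hcWnn h1
  have hMW : c*(1/2+α) < M := by
    have h := hgt; rw [hfs0, hfd0] at h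
    exact lt_of_pow_lt_pow_left₀ 2 hM0.le (by linarith)
  have hM1 : 1 ≤ M := by linarith
  have hα'c : c*α' = M - c/2 := by
    rw [hα', hmv, show (1:ℝ)-a^2 = c^2 from hc2.symm]
    field_simp
    ring_nf
    linear_combination hc2
  have hβ'c : c*β' = c*s + 4*M*c - 4*M*s := by
    rw [hβ', hmv, show (1:ℝ)-a^2 = c^2 from hc2.symm]
    field_simp
  have hβval : β = 4*M - s - 4*α*s := by rw [hMdef]; ring
  have hαα' : α ≤ α' := by
    have h1 : c*α ≤ c*α' := by rw [hα'c]; linarith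
    exact (mul_le_mul_iff_right₀ hc0).mp h1
  intro u hu
  obtain ⟨hu1, hu2⟩ := hu
  have ht0 : (0:ℝ) ≤ u^2 := sq_nonneg u
  have ht1 : u^2 ≤ 1 := by nlinarith
  have hQ0 : (0:ℝ) ≤ (1-u^2)/2 := by linarith
  have hP0 : (0:ℝ) ≤ (1+u^2)/2 := by linarith
  constructor
  · rw [fd_eq, fd_eq, ← hsdef]
    have h1 : 0 ≤ (1+u^2)/2 + 2*α*((1-u^2)/2) :=
      add_nonneg hP0 (mul_nonneg (by linarith : (0:ℝ) ≤ 2*α) hQ0)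
    have h2 : (1+u^2)/2 + 2*α*((1-u^2)/2) ≤ (1+u^2)/2 + 2*α'*((1-u^2)/2) :=
      add_le_add_right (mul_le_mul_of_nonneg_right (by linarith : 2*α ≤ 2*α') hQ0) _
    have hx := mul_le_mul_of_nonneg_left (pow_le_pow_left₀ h1 h2 2) (sq_nonneg (a*u))
    have hx' : (a*u*((1+u^2)/2 + 2*α*((1-u^2)/2)))^2
        ≤ (a*u*((1+u^2)/2 + 2*α'*((1-u^2)/2)))^2 := by
      calc (a*u*((1+u^2)/2 + 2*α*((1-u^2)/2)))^2
          = (a*u)^2 * ((1+u^2)/2 + 2*α*((1-u^2)/2))^2 := by ring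
        _ ≤ (a*u)^2 * ((1+u^2)/2 + 2*α'*((1-u^2)/2))^2 := hx
        _ = (a*u*((1+u^2)/2 + 2*α'*((1-u^2)/2)))^2 := by ring
    have h3 : 0 ≤ ((1+u^2)/2)^2 + 4*α*((1+u^2)/2)*((1-u^2)/2) :=
      add_nonneg (sq_nonneg _)
        (mul_nonneg (mul_nonneg (by linarith : (0:ℝ) ≤ 4*α) hP0) hQ0)
    have hZ0 : 0 ≤ s*(((1+u^2)/2)^2 + 4*α*((1+u^2)/2)*((1-u^2)/2)) + β*((1-u^2)/2)^2 :=
      add_nonneg (mul_nonneg hs0 h3) (mul_nonneg hβ.le (sq_nonneg _))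
    have hd : c*(s*(((1+u^2)/2)^2 + 4*α'*((1+u^2)/2)*((1-u^2)/2)) + β'*((1-u^2)/2)^2)
        - c*(s*(((1+u^2)/2)^2 + 4*α*((1+u^2)/2)*((1-u^2)/2)) + β*((1-u^2)/2)^2)
        = 4*s*(M - c*(1/2+α))*((1-u^2)/2)*u^2 := by
      linear_combination (4*s*((1+u^2)/2)*((1-u^2)/2)) * hα'c
        + (((1-u^2)/2)^2) * hβ'c - (c*((1-u^2)/2)^2) * hβval
    have h4 : 0 ≤ 4*s*(M - c*(1/2+α))*((1-u^2)/2)*u^2 :=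
      mul_nonneg (mul_nonneg (mul_nonneg
        (by linarith : (0:ℝ) ≤ 4*s) (by linarith : 0 ≤ M - c*(1/2+α))) hQ0) ht0
    have hZle : s*(((1+u^2)/2)^2 + 4*α*((1+u^2)/2)*((1-u^2)/2)) + β*((1-u^2)/2)^2
        ≤ s*(((1+u^2)/2)^2 + 4*α'*((1+u^2)/2)*((1-u^2)/2)) + β'*((1-u^2)/2)^2 := by
      refine (mul_le_mul_iff_right₀ hc0).mp ?_
      linarith [hd, h4]
    have hz2 := pow_le_pow_left₀ hZ0 hZle 2
    have hsum := add_le_add (mul_le_mul_of_nonneg_left hx' (by norm_num : (0:ℝ) ≤ 2)) hz2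
    exact sub_le_sub_right hsum 1
  · rw [fd_eq, ← hsdef, hfd0]
    have e1 : (1+u^2)/2 + 2*α'*((1-u^2)/2) = (c*u^2 + M*(1-u^2))/c := by
      rw [eq_div_iff hcne]
      linear_combination (1-u^2) * hα'c
    have e2 : s*(((1+u^2)/2)^2 + 4*α'*((1+u^2)/2)*((1-u^2)/2)) + β'*((1-u^2)/2)^2
        = (c*s*(u^2)^2 + 2*M*s*u^2*(1-u^2) + M*c*(1-u^2)^2)/c := by
      rw [eq_div_iff hcne]
      linear_combination (4*s*((1+u^2)/2)*((1-u^2)/2)) * hα'c + (((1-u^2)/2)^2) * hβ'c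
    rw [e1, e2]
    have hkey := key2 a c s M (u^2) (by linarith) (by linarith) hs0 hsc hc1 hM1 ht0 ht1
    have hXY : 2*(a*u*((c*u^2 + M*(1-u^2))/c))^2
          + ((c*s*(u^2)^2 + 2*M*s*u^2*(1-u^2) + M*c*(1-u^2)^2)/c)^2
        = (2*a^2*u^2*(c*u^2 + M*(1-u^2))^2
          + (c*s*(u^2)^2 + 2*M*s*u^2*(1-u^2) + M*c*(1-u^2)^2)^2)/c^2 := by
      field_simp
    rw [hXY]
    have hfin : (2*a^2*u^2*(c*u^2 + M*(1-u^2))^2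
          + (c*s*(u^2)^2 + 2*M*s*u^2*(1-u^2) + M*c*(1-u^2)^2)^2)/c^2 ≤ M^2 := by
      rw [div_le_iff₀ (by positivity : (0:ℝ) < c^2)]
      exact hkey
    exact sub_le_sub_right hfin 1

end
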